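/- Let q ∈ ℂ with q ≠ 0, let n ∈ ℕ, and let k, m ∈ {0,…,n}. Then ∑_{r=0}^{n} (-1)^{n-r} · C(n-k, n-r)_q · q^{-r(n-r)} · q^{-(r-m)(r-m-1)/2} · C(r, m)_{q⁻¹} = q^{e} · C(k, n-m)_q, where e ∈ ℤ is the integer e = (k+m-n)(k+m-n-1)/2 − k(k-1)/2 (computed with integer arithmetic; (t)(t-1)/2 is a nonnegative integer for every t ∈ ℤ) and all powers of q are integer powers. -/

import Mathlib

/-- The Gaussian ($q$-)binomial coefficient `C(n,k)_q`, defined by the recursion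
`C(n+1,k)_q = C(n,k-1)_q + q^k * C(n,k)_q`, with `C(n,0)_q = C(n,n)_q = 1` and
`C(n,k)_q = 0` for `k > n`. -/
noncomputable def qBinom (q : ℂ) : ℕ → ℕ → ℂ
  | 0, 0 => 1
  | 0, _ + 1 => 0
  | _ + 1, 0 => 1
  | n + 1, k + 1 => qBinom q n k + q ^ (k + 1) * qBinom q n (k + 1)

/-- The matrix `σ₁(q,n)` with entries `σ₁(q,n)_{km} = C(n-k, n-m)_q`. -/
noncomputable def sigma1 (q : ℂ) (n : ℕ) : Matrix (Fin (n + 1)) (Fin (n + 1)) ℂ :=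
  fun k m => qBinom q (n - k.val) (n - m.val)

/-- The matrix `σ₂(q,n)` with entries
`σ₂(q,n)_{km} = (-1)^{k+m} q^{-(k-m)(k-m-1)/2} C(k,m)_{q⁻¹}` for `m ≤ k`, and `0` otherwise. -/
noncomputable def sigma2 (q : ℂ) (n : ℕ) : Matrix (Fin (n + 1)) (Fin (n + 1)) ℂ :=
  fun k m =>
    if m.val ≤ k.val then
      (-1 : ℂ) ^ (k.val + m.val) *
        q ^ (-(((k.val - m.val) * (k.val - m.val - 1) / 2 : ℕ) : ℤ)) *
        qBinom q⁻¹ k.val m.val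
    else 0

/-- The matrix `S(q)` with entries `S(q)_{km} = (-1)^k q^{-k(k-1)/2}` when `k+m = n`,
and `0` otherwise. -/
noncomputable def Smat (q : ℂ) (n : ℕ) : Matrix (Fin (n + 1)) (Fin (n + 1)) ℂ :=
  fun k m =>
    if k.val + m.val = n then (-1 : ℂ) ^ k.val * q ^ (-((k.val * (k.val - 1) / 2 : ℕ) : ℤ))
    else 0

/-- `A^♯`, the matrix with entries `(A^♯)_{ij} = A_{n-i, n-j}`. -/
noncomputable def msharp {n : ℕ} (A : Matrix (Fin (n + 1)) (Fin (n + 1)) ℂ) :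
    Matrix (Fin (n + 1)) (Fin (n + 1)) ℂ :=
  fun i j => A i.rev j.rev

lemma qBinom_n_zero (q : ℂ) (n : ℕ) : qBinom q n 0 = 1 := by cases n <;> simp [qBinom]
lemma qBinom_succ_succ (q : ℂ) (n k : ℕ) :
    qBinom q (n+1) (k+1) = qBinom q n k + q ^ (k+1) * qBinom q n (k+1) := by simp [qBinom]
lemma qBinom_eq_zero (q : ℂ) : ∀ {n k : ℕ}, n < k → qBinom q n k = 0 := by
  intro n
  induction n with
  | zero => intro k hk; match k, hk with | k+1, _ => simp [qBinom]
  | succ n ih =>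
    intro k hk
    match k, hk with
    | k+1, hk => rw [qBinom_succ_succ, ih (by omega), ih (by omega)]; ring
lemma qBinom_self (q : ℂ) (n : ℕ) : qBinom q n n = 1 := by
  induction n with
  | zero => simp [qBinom]
  | succ n ih => rw [qBinom_succ_succ, ih, qBinom_eq_zero q (by omega)]; ring
lemma qBinom_rec4 (q : ℂ) : ∀ n j : ℕ,
    qBinom q (n+1) (j+1) = q ^ (n - j) * qBinom q n j + qBinom q n (j+1) := by
  intro n
  induction n with
  | zero =>
    intro j
    cases j with
    | zero => simp [qBinom]
    | succ i =>
      rw [qBinom_succ_succ, qBinom_eq_zero q (show 0 < i+1 by omega),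
        qBinom_eq_zero q (show 0 < i+2 by omega)]
      ring
  | succ n ih =>
    intro j
    cases j with
    | zero =>
      simp only [Nat.sub_zero]
      have h3 := qBinom_succ_succ q (n+1) 0
      have h1 := ih 0
      have h2 := qBinom_succ_succ q n 0
      simp only [Nat.sub_zero, qBinom_n_zero] at h1 h2 h3 ⊢
      linear_combination h3 + q * h1 - h2
    | succ i =>
      rcases lt_trichotomy i n with hin | rfl | hin
      · obtain ⟨d, rfl⟩ : ∃ d, n = i + 1 + d := ⟨n - i - 1, by omega⟩
        have hd := qBinom_succ_succ q (i+1+d+1) (i+1)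
        have h1 := ih i
        have h2 := ih (i+1)
        have hd1 := qBinom_succ_succ q (i+1+d) i
        have hd2 := qBinom_succ_succ q (i+1+d) (i+1)
        simp only [show i+1+d - i = d+1 from by omega, show i+1+d - (i+1) = d from by omega,
          show i+1+d+1 - (i+1) = d+1 from by omega] at h1 h2 ⊢
        linear_combination hd + h1 + q^(i+2)*h2 - q^(d+1)*hd1 - hd2
      · rw [qBinom_self, qBinom_self, qBinom_eq_zero q (show i+1 < i+2 by omega),
          show i+1 - (i+1) = 0 from by omega]
        ring
      · rw [qBinom_eq_zero q (show n+2 < i+2 by omega),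
          qBinom_eq_zero q (show n+1 < i+1 by omega),
          qBinom_eq_zero q (show n+1 < i+2 by omega)]
        ring
lemma qBinom_symm (q : ℂ) : ∀ n k : ℕ, k ≤ n → qBinom q n k = qBinom q n (n - k) := by
  intro n
  induction n with
  | zero => intro k hk; interval_cases k; simp
  | succ n ih =>
    intro k hk
    cases k with
    | zero => simp [qBinom_n_zero, qBinom_self]
    | succ k =>
      rcases eq_or_lt_of_le hk with h | h
      · rw [← h]; simp [qBinom_self, qBinom_n_zero]
      · have hk' : k + 1 ≤ n := by omega
        rw [qBinom_succ_succ, show n + 1 - (k+1) = (n - (k+1)) + 1 from by omega,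
          qBinom_rec4, show n - (n - (k+1)) = k + 1 from by omega,
          ← ih (k+1) hk', show n - (k+1) + 1 = n - k from by omega, ← ih k (by omega)]
        ring
lemma two_mul_choose_two (s : ℕ) : (2:ℤ) * (s.choose 2 : ℤ) = (s:ℤ) * ((s:ℤ) - 1) := by
  induction s with
  | zero => simp
  | succ s ih =>
    rw [show s + 1 = s + 1 from rfl, Nat.choose_succ_succ, Nat.choose_one_right]
    push_cast
    push_cast at ih
    linarith
lemma int_half (x : ℤ) : 2 * (x * (x - 1) / 2) = x * (x - 1) := by
  apply Int.mul_ediv_cancel'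
  have h := Int.even_mul_succ_self (x - 1)
  rw [show x - 1 + 1 = x by ring] at h
  rw [mul_comm]
  exact h.two_dvd
lemma int_choose_cast (t : ℕ) : ((t:ℤ) * ((t:ℤ) - 1)) / 2 = (t.choose 2 : ℤ) := by
  have h := int_half (t : ℤ)
  have h2 := two_mul_choose_two t
  omega
lemma qBinom_inv (q : ℂ) (hq : q ≠ 0) :
    ∀ n k : ℕ, qBinom q⁻¹ n k = q ^ (-((k*(n-k):ℕ):ℤ)) * qBinom q n k := by
  intro n
  induction n with
  | zero =>
    intro k
    cases k with
    | zero => simp [qBinom_n_zero]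
    | succ k => rw [qBinom_eq_zero _ (by omega), qBinom_eq_zero _ (by omega)]; ring
  | succ n ih =>
    intro k
    cases k with
    | zero => simp [qBinom_n_zero]
    | succ k =>
      rw [qBinom_succ_succ, qBinom_rec4, ih k, ih (k+1)]
      by_cases hkn : k < n
      · obtain ⟨c, hc⟩ : ∃ c, n - (k+1) = c := ⟨_, rfl⟩
        rw [hc, show n - k = c + 1 from by omega, show n + 1 - (k+1) = c + 1 from by omega]
        have e0 : ∀ a : ℕ, q ^ (-(a:ℤ)) = (q ^ a)⁻¹ := by
          intro a; rw [zpow_neg, zpow_natCast]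
        rw [e0, e0, e0, inv_pow]
        have h1 : q ^ (k*(c+1)) ≠ 0 := pow_ne_zero _ hq
        have h2 : q ^ ((k+1)*c) ≠ 0 := pow_ne_zero _ hq
        have h3 : q ^ ((k+1)*(c+1)) ≠ 0 := pow_ne_zero _ hq
        have h4 : q ^ (k+1) ≠ 0 := pow_ne_zero _ hq
        field_simp
        ring
      · -- n ≤ k
        rw [qBinom_eq_zero q (show n < k+1 by omega)]
        by_cases hk : k = n
        · subst hk
          simp [qBinom_self, show k - k = 0 from by omega, show k+1-(k+1) = 0 from by omega]
        · rw [qBinom_eq_zero q (show n < k by omega)]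
          ring
lemma choose_succ_two (i : ℕ) : (i+1).choose 2 = i.choose 2 + i := by
  have h : (i+1).choose 2 = i.choose 1 + i.choose 2 := Nat.choose_succ_succ i 1
  rw [h, Nat.choose_one_right, Nat.add_comm]
lemma qBinom_star (q : ℂ) : ∀ a k m : ℕ, m ≤ a + k →
    ∑ j ∈ Finset.range (a+1),
      (-1:ℂ)^j * q^(j.choose 2) * qBinom q a j * qBinom q (a+k-j) m
    = q^(a*(a+k-m)) * qBinom q k (a+k-m) := by
  intro a
  induction a with
  | zero =>
    intro k m hm
    simp only [Finset.sum_range_one, pow_zero, Nat.choose_zero_succ, one_mul,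
      Nat.zero_add, zero_add, Nat.zero_mul, Nat.sub_zero, qBinom_n_zero, mul_one]
    rw [qBinom_symm q k m (by omega)]
  | succ a ih =>
    intro k m hm
    set f : ℕ → ℂ := fun j =>
      (-1:ℂ)^j * q^(j.choose 2) * qBinom q (a+1) j * qBinom q (a+1+k-j) m with hf
    set s : ℕ → ℂ := fun i =>
      (-1:ℂ)^i * q^(i.choose 2) * qBinom q a i * qBinom q (a+k-i) m with hs
    set t : ℕ → ℂ := fun j =>
      (-1:ℂ)^j * q^(j.choose 2) * qBinom q a j * qBinom q (a+(k+1)-j) m with ht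
    by_cases hmn : m ≤ a + k
    · -- main case
      have key : ∀ i ∈ Finset.range (a+1), f (i+1) = (-q^a) * s i + t (i+1) := by
        intro i hi
        simp only [Finset.mem_range] at hi
        rw [hf, hs, ht]
        simp only []
        rw [qBinom_rec4, choose_succ_two,
            show a+1+k-(i+1) = a+k-i from by omega,
            show a+(k+1)-(i+1) = a+k-i from by omega]
        have hpow : q ^ (i.choose 2 + i) * q ^ (a-i) = q ^ (i.choose 2 + a) := by
          rw [← pow_add]; congr 1; omega
        rw [pow_add, pow_add]
        linear_combination ((-1:ℂ)^(i+1) * qBinom q a i * qBinom q (a+k-i) m) * hpow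
      have e1 : ∑ j ∈ Finset.range (a+1+1), f j
          = (∑ i ∈ Finset.range (a+1), f (i+1)) + f 0 := Finset.sum_range_succ' f (a+1)
      have e2 : ∑ i ∈ Finset.range (a+1), f (i+1)
          = (-q^a) * (∑ i ∈ Finset.range (a+1), s i)
            + ∑ i ∈ Finset.range (a+1), t (i+1) := by
        rw [Finset.mul_sum, ← Finset.sum_add_distrib]
        exact Finset.sum_congr rfl key
      have ef0 : f 0 = t 0 := by
        rw [hf, ht]; simp only []
        rw [qBinom_n_zero, qBinom_n_zero, show a+1+k-0 = a+(k+1)-0 from by omega]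
      have e3 : (∑ i ∈ Finset.range (a+1), t (i+1)) + t 0
          = ∑ j ∈ Finset.range (a+1), t j := by
        rw [← Finset.sum_range_succ' t (a+1), Finset.sum_range_succ]
        have : t (a+1) = 0 := by
          rw [ht]; simp only []
          rw [qBinom_eq_zero q (show a < a+1 from by omega)]; ring
        rw [this, add_zero]
      have eIH1 : ∑ i ∈ Finset.range (a+1), s i
          = q^(a*(a+k-m)) * qBinom q k (a+k-m) := ih k m hmn
      have eIH2 : ∑ j ∈ Finset.range (a+1), t j
          = q^(a*(a+(k+1)-m)) * qBinom q (k+1) (a+(k+1)-m) := ih (k+1) m (by omega)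
      obtain ⟨B, hB⟩ : ∃ B, a + k - m = B := ⟨_, rfl⟩
      rw [e1, e2, add_assoc, ef0, e3, eIH1, eIH2, hB,
        show a+(k+1)-m = B+1 from by omega, show a+1+k-m = B+1 from by omega,
        qBinom_succ_succ]
      ring
    · -- edge case m = a + 1 + k
      have hm' : m = a + 1 + k := by omega
      subst hm'
      rw [Finset.sum_eq_single 0]
      · rw [Nat.sub_zero, qBinom_n_zero, qBinom_self, Nat.sub_self, qBinom_n_zero]
        simp
      · intro j hj hj0
        rw [qBinom_eq_zero q (show a+1+k-j < a+1+k from by omega)]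
        ring
      · intro h
        simp at h
lemma term_eq (q : ℂ) (hq : q ≠ 0) (n k m j : ℕ) (hj : j ≤ n) (hm : m ≤ n) :
    (-1 : ℂ) ^ (n - (n - j)) * qBinom q (n - k) (n - (n - j)) *
        q ^ (-(((n - j) * (n - (n - j)) : ℕ) : ℤ)) *
        q ^ (-(((((n - j : ℕ)) : ℤ) - (m : ℤ)) * ((((n - j : ℕ)) : ℤ) - (m : ℤ) - 1) / 2)) *
        qBinom q⁻¹ (n - j) m
    = q ^ (-(((n - m).choose 2 : ℕ) : ℤ) - ((m * (n - m) : ℕ) : ℤ)) *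
        ((-1:ℂ) ^ j * q ^ (j.choose 2) * qBinom q (n - k) j * qBinom q (n - j) m) := by
  rw [show n - (n - j) = j from by omega]
  by_cases hmr : m ≤ n - j
  · rw [qBinom_inv q hq (n - j) m]
    have hc : (((n - j : ℕ) : ℤ) - (m : ℤ)) = ((n - j - m : ℕ) : ℤ) := by omega
    rw [hc, int_choose_cast]
    have h1 := two_mul_choose_two (n - j - m)
    have h2 := two_mul_choose_two (n - m)
    have h3 := two_mul_choose_two j
    rw [show ((n - j - m : ℕ) : ℤ) = (n : ℤ) - j - m from by omega] at h1
    rw [show ((n - m : ℕ) : ℤ) = (n : ℤ) - m from by omega] at h2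
    have e1 : (((n - j) * j : ℕ) : ℤ) = ((n : ℤ) - j) * j := by
      push_cast [Nat.cast_sub hj]; ring
    have e2 : ((m * (n - j - m) : ℕ) : ℤ) = (m : ℤ) * ((n : ℤ) - j - m) := by
      push_cast [Nat.cast_sub hmr, Nat.cast_sub hj]; ring
    have e3 : ((m * (n - m) : ℕ) : ℤ) = (m : ℤ) * ((n : ℤ) - m) := by
      push_cast [Nat.cast_sub hm]; ring
    have hE : (-(((n - j) * j : ℕ) : ℤ)) + (-(((n - j - m).choose 2 : ℕ) : ℤ))
          + (-((m * (n - j - m) : ℕ) : ℤ))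
        = (-(((n - m).choose 2 : ℕ) : ℤ) - ((m * (n - m) : ℕ) : ℤ)) + ((j.choose 2 : ℕ) : ℤ) := by
      refine mul_left_cancel₀ (two_ne_zero) ?_
      rw [e1, e2, e3]
      linear_combination (-1 : ℤ) * h1 + h2 - h3
    calc (-1 : ℂ) ^ j * qBinom q (n - k) j *
            q ^ (-(((n - j) * j : ℕ) : ℤ)) * q ^ (-(((n - j - m).choose 2 : ℕ) : ℤ)) *
            (q ^ (-((m * (n - j - m) : ℕ) : ℤ)) * qBinom q (n - j) m)
        = ((-1 : ℂ) ^ j * qBinom q (n - k) j * qBinom q (n - j) m) *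
            q ^ ((-(((n - j) * j : ℕ) : ℤ)) + (-(((n - j - m).choose 2 : ℕ) : ℤ))
              + (-((m * (n - j - m) : ℕ) : ℤ))) := by
          rw [zpow_add₀ hq, zpow_add₀ hq]; ring
      _ = ((-1 : ℂ) ^ j * qBinom q (n - k) j * qBinom q (n - j) m) *
            q ^ ((-(((n - m).choose 2 : ℕ) : ℤ) - ((m * (n - m) : ℕ) : ℤ))
              + ((j.choose 2 : ℕ) : ℤ)) := by rw [hE]
      _ = q ^ (-(((n - m).choose 2 : ℕ) : ℤ) - ((m * (n - m) : ℕ) : ℤ)) *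
            ((-1:ℂ) ^ j * q ^ (j.choose 2) * qBinom q (n - k) j * qBinom q (n - j) m) := by
          rw [zpow_add₀ hq, zpow_natCast]; ring
  · rw [qBinom_eq_zero q⁻¹ (show n - j < m from by omega),
      qBinom_eq_zero q (show n - j < m from by omega)]
    ring

/-- For `q ≠ 0` and `k, m ≤ n`,
`∑_{r=0}^{n} (-1)^{n-r} C(n-k,n-r)_q q^{-r(n-r)} q^{-(r-m)(r-m-1)/2} C(r,m)_{q⁻¹}
  = q^{(k+m-n)(k+m-n-1)/2 - k(k-1)/2} C(k, n-m)_q`. -/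
theorem qBinom_convolution_identity (n : ℕ) (q : ℂ) (hq : q ≠ 0)
    (k m : ℕ) (hk : k ≤ n) (hm : m ≤ n) :
    ∑ r ∈ Finset.range (n + 1),
        (-1 : ℂ) ^ (n - r) * qBinom q (n - k) (n - r) *
          q ^ (-((r * (n - r) : ℕ) : ℤ)) *
          q ^ (-((((r : ℤ) - (m : ℤ)) * ((r : ℤ) - (m : ℤ) - 1)) / 2)) *
          qBinom q⁻¹ r m
      = q ^ ((((k : ℤ) + (m : ℤ) - (n : ℤ)) * ((k : ℤ) + (m : ℤ) - (n : ℤ) - 1)) / 2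
            - ((k : ℤ) * ((k : ℤ) - 1)) / 2) *
          qBinom q k (n - m) := by
  rw [← Finset.sum_range_reflect]
  simp only [Nat.add_sub_cancel]
  rw [Finset.sum_congr rfl (fun j hj =>
    term_eq q hq n k m j (by simp only [Finset.mem_range] at hj; omega) hm)]
  rw [← Finset.mul_sum]
  have hsub : Finset.range (n - k + 1) ⊆ Finset.range (n + 1) :=
    Finset.range_subset_range.mpr (by omega)
  have hz : ∀ x ∈ Finset.range (n + 1), x ∉ Finset.range (n - k + 1) →
      (-1:ℂ) ^ x * q ^ (x.choose 2) * qBinom q (n - k) x * qBinom q (n - x) m = 0 := by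
    intro x hx hxs
    rw [qBinom_eq_zero q (show n - k < x from by
      simp only [Finset.mem_range] at hx hxs; omega)]
    ring
  rw [← Finset.sum_subset hsub hz]
  have hstar := qBinom_star q (n - k) k m (by omega)
  rw [Nat.sub_add_cancel hk] at hstar
  rw [hstar]
  rw [← zpow_natCast q ((n - k) * (n - m)), ← mul_assoc, ← zpow_add₀ hq]
  congr 2
  have hb := two_mul_choose_two (n - m)
  rw [show ((n - m : ℕ) : ℤ) = (n : ℤ) - m from by omega] at hb
  have h1 := int_half ((k : ℤ) + (m : ℤ) - (n : ℤ))
  have h2 := int_half ((k : ℤ))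
  have d1 : ((m * (n - m) : ℕ) : ℤ) = (m : ℤ) * ((n : ℤ) - m) := by
    push_cast [Nat.cast_sub hm]; ring
  have d2 : (((n - k) * (n - m) : ℕ) : ℤ) = ((n : ℤ) - k) * ((n : ℤ) - m) := by
    push_cast [Nat.cast_sub hm, Nat.cast_sub hk]; ring
  refine mul_left_cancel₀ (two_ne_zero) ?_
  rw [d1, d2]
  linear_combination (-1 : ℤ) * hb - h1 + h2
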